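/- Uniqueness of R in the generalized QR decomposition (tall case): Let η be a d×d diagonal ±1 matrix and P ∈ ℝ^{d×n}, d > n, of rank n with all columns non-null. If P = Q̃ D̃_η R̃ = Q̃' D̃_η' R̃' where Q̃, Q̃' ∈ ℝ^{d×n} have columns orthonormal with respect to η (Q̃ᵀηQ̃ = D̃_η, Q̃'ᵀηQ̃' = D̃_η' diagonal with entries ±1), and R̃, R̃' are n×n upper triangular with positive diagonals, then Q̃ = Q̃', D̃_η = D̃_η', and R̃ = R̃'. -/

import Mathlib

open Matrix

private lemma genQR_aux_sign {a b s : ℝ} (ha : a = 1 ∨ a = -1) (hb : b = 1 ∨ b = -1)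
    (hs : 0 < s) (h : a = s * (b * s)) : s = 1 := by
  rcases ha with ha | ha <;> rcases hb with hb | hb <;> subst ha <;> subst hb <;> nlinarith

/-- Uniqueness of the generalized QR decomposition, tall case (`d > n`). -/
theorem genQR_unique_tall {d n : ℕ} (hdn : n < d)
    (η : Matrix (Fin d) (Fin d) ℝ)
    (f : Fin d → ℝ) (hη : η = Matrix.diagonal f) (hf : ∀ i, f i = 1 ∨ f i = -1)
    (P : Matrix (Fin d) (Fin n) ℝ) (hrank : P.rank = n)
    (hnull : ∀ j : Fin n, (Pᵀ * η * P) j j ≠ 0)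
    (Q Q' : Matrix (Fin d) (Fin n) ℝ)
    (D D' R R' : Matrix (Fin n) (Fin n) ℝ)
    (hQ : Qᵀ * η * Q = D) (hQ' : Q'ᵀ * η * Q' = D')
    (g g' : Fin n → ℝ)
    (hD : D = Matrix.diagonal g) (hg : ∀ i, g i = 1 ∨ g i = -1)
    (hD' : D' = Matrix.diagonal g') (hg' : ∀ i, g' i = 1 ∨ g' i = -1)
    (hR : ∀ i j : Fin n, j < i → R i j = 0) (hRd : ∀ i, 0 < R i i)
    (hR' : ∀ i j : Fin n, j < i → R' i j = 0) (hRd' : ∀ i, 0 < R' i i)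
    (hdec : P = Q * D * R) (hdec' : P = Q' * D' * R') :
    Q = Q' ∧ D = D' ∧ R = R' := by
  -- triangularity
  have hRtri : R.BlockTriangular (id : Fin n → Fin n) := fun i j h => hR i j h
  have hRtri' : R'.BlockTriangular (id : Fin n → Fin n) := fun i j h => hR' i j h
  -- invertibility of R, R'
  have hdetR : IsUnit R.det := by
    rw [Matrix.det_of_upperTriangular hRtri]
    exact (Finset.prod_pos fun i _ => hRd i).ne'.isUnit
  have hdetR' : IsUnit R'.det := by
    rw [Matrix.det_of_upperTriangular hRtri']
    exact (Finset.prod_pos fun i _ => hRd' i).ne'.isUnit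
  haveI : Invertible R := R.invertibleOfIsUnitDet hdetR
  have hRinv_tri : R⁻¹.BlockTriangular (id : Fin n → Fin n) :=
    Matrix.blockTriangular_inv_of_blockTriangular hRtri
  have hg0 : ∀ i, g i ≠ 0 := fun i => by rcases hg i with h | h <;> rw [h] <;> norm_num
  have hg0' : ∀ i, g' i ≠ 0 := fun i => by rcases hg' i with h | h <;> rw [h] <;> norm_num
  have hDD : D * D = 1 := by
    rw [hD, Matrix.diagonal_mul_diagonal]
    have : (fun i => g i * g i) = fun _ : Fin n => (1 : ℝ) :=
      funext fun i => by rcases hg i with h | h <;> rw [h] <;> norm_num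
    rw [this, Matrix.diagonal_one]
  have hDD' : D' * D' = 1 := by
    rw [hD', Matrix.diagonal_mul_diagonal]
    have : (fun i => g' i * g' i) = fun _ : Fin n => (1 : ℝ) :=
      funext fun i => by rcases hg' i with h | h <;> rw [h] <;> norm_num
    rw [this, Matrix.diagonal_one]
  -- key identity : Rᵀ * D * R = R'ᵀ * D' * R'
  have hM : Rᵀ * D * R = R'ᵀ * D' * R' := by
    have h1 : Pᵀ * η * P = Rᵀ * D * R := by
      have hDsymm : Dᵀ = D := by rw [hD, Matrix.diagonal_transpose]
      calc Pᵀ * η * P = Rᵀ * Dᵀ * (Qᵀ * η * Q) * (D * R) := by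
            rw [hdec]; simp only [Matrix.transpose_mul, Matrix.mul_assoc]
        _ = Rᵀ * (D * (D * (D * R))) := by
            rw [hQ, hDsymm]; simp only [Matrix.mul_assoc]
        _ = Rᵀ * D * R := by
            rw [← Matrix.mul_assoc D D, hDD, Matrix.one_mul, Matrix.mul_assoc]
    have h2 : Pᵀ * η * P = R'ᵀ * D' * R' := by
      have hDsymm' : D'ᵀ = D' := by rw [hD', Matrix.diagonal_transpose]
      calc Pᵀ * η * P = R'ᵀ * D'ᵀ * (Q'ᵀ * η * Q') * (D' * R') := by
            rw [hdec']; simp only [Matrix.transpose_mul, Matrix.mul_assoc]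
        _ = R'ᵀ * (D' * (D' * (D' * R'))) := by
            rw [hQ', hDsymm']; simp only [Matrix.mul_assoc]
        _ = R'ᵀ * D' * R' := by
            rw [← Matrix.mul_assoc D' D', hDD', Matrix.one_mul, Matrix.mul_assoc]
    rw [← h1, h2]
  -- the transition matrix
  obtain ⟨T, hT⟩ : ∃ T, T = R' * R⁻¹ := ⟨_, rfl⟩
  have hTtri : T.BlockTriangular (id : Fin n → Fin n) := hT ▸ hRtri'.mul hRinv_tri
  have hdetRT : IsUnit Rᵀ.det := by rwa [Matrix.det_transpose]
  -- D = Tᵀ * D' * T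
  have hDT : D = Tᵀ * D' * T := by
    symm
    calc Tᵀ * D' * T = (Rᵀ)⁻¹ * (R'ᵀ * D' * R') * R⁻¹ := by
          rw [hT, Matrix.transpose_mul, Matrix.transpose_nonsing_inv]
          simp only [Matrix.mul_assoc]
      _ = (Rᵀ)⁻¹ * (Rᵀ * D * R) * R⁻¹ := by rw [hM]
      _ = (Rᵀ)⁻¹ * Rᵀ * (D * (R * R⁻¹)) := by simp only [Matrix.mul_assoc]
      _ = D := by rw [Matrix.nonsing_inv_mul _ hdetRT, Matrix.mul_nonsing_inv _ hdetR,
            Matrix.one_mul, Matrix.mul_one]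
  -- T is invertible
  have hdetT : IsUnit T.det := by
    rw [hT, Matrix.det_mul, Matrix.det_nonsing_inv]
    exact hdetR'.mul (isUnit_ringInverse.mpr hdetR)
  have hdetTt : IsUnit Tᵀ.det := by rwa [Matrix.det_transpose]
  haveI : Invertible T := T.invertibleOfIsUnitDet hdetT
  haveI : Invertible Tᵀ := Tᵀ.invertibleOfIsUnitDet hdetTt
  -- U := D' * T is both upper and lower triangular
  have hU_up : (D' * T).BlockTriangular (id : Fin n → Fin n) :=
    (hD' ▸ Matrix.blockTriangular_diagonal g').mul hTtri
  have hU_low : (D' * T).BlockTriangular (OrderDual.toDual : Fin n → (Fin n)ᵒᵈ) := by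
    have key : Tᵀ * (D' * T) = D := by rw [← Matrix.mul_assoc]; exact hDT.symm
    have hU_eq : D' * T = (Tᵀ)⁻¹ * D := by
      rw [← key, ← Matrix.mul_assoc ((Tᵀ)⁻¹) Tᵀ (D' * T),
        Matrix.nonsing_inv_mul _ hdetTt, Matrix.one_mul]
    rw [hU_eq]
    exact (Matrix.blockTriangular_inv_of_blockTriangular hTtri.transpose).mul
      (hD ▸ Matrix.blockTriangular_diagonal g)
  -- hence T is diagonal
  have hToff : ∀ i j : Fin n, i ≠ j → T i j = 0 := by
    intro i j hij
    have hU0 : (D' * T) i j = 0 := by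
      rcases lt_or_gt_of_ne hij with h | h
      · exact hU_low (by exact_mod_cast h)
      · exact hU_up (by exact_mod_cast h)
    have : (D' * T) i j = g' i * T i j := by
      rw [hD', Matrix.diagonal_mul]
    rw [this] at hU0
    exact (mul_eq_zero.mp hU0).resolve_left (hg0' i)
  -- diagonal entries of T are positive
  have hRinv_mul : R⁻¹ * R = 1 := Matrix.nonsing_inv_mul _ hdetR
  have hRinv_diag : ∀ i, R⁻¹ i i * R i i = 1 := by
    intro i
    have h1 : (R⁻¹ * R) i i = 1 := by rw [hRinv_mul, Matrix.one_apply_eq]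
    rw [Matrix.mul_apply] at h1
    rwa [Finset.sum_eq_single i (fun k _ hk => ?_) (by simp)] at h1
    rcases lt_or_gt_of_ne hk with h | h
    · rw [hRinv_tri (show (id k : Fin n) < id i from h), zero_mul]
    · rw [hR k i h, mul_zero]
  have hTdpos : ∀ i, 0 < T i i := by
    intro i
    have h1 : T i i = R' i i * R⁻¹ i i := by
      rw [hT, Matrix.mul_apply]
      rw [Finset.sum_eq_single i (fun k _ hk => ?_) (by simp)]
      rcases lt_or_gt_of_ne hk with h | h
      · rw [hR' i k h, zero_mul]
      · rw [hRinv_tri (show (id i : Fin n) < id k from h), mul_zero]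
    have hRinvpos : 0 < R⁻¹ i i := by
      have := hRinv_diag i
      nlinarith [hRd i]
    rw [h1]; exact mul_pos (hRd' i) hRinvpos
  -- diagonal entries of T are 1
  have hTdiag1 : ∀ i, T i i = 1 := by
    intro i
    have hDTi : D i i = T i i * (g' i * T i i) := by
      have h1 : (Tᵀ * (D' * T)) i i = T i i * (g' i * T i i) := by
        rw [Matrix.mul_apply]
        rw [Finset.sum_eq_single i (fun k _ hk => ?_) (by simp)]
        · rw [Matrix.transpose_apply, hD', Matrix.diagonal_mul]
        · rw [Matrix.transpose_apply, hToff k i hk, zero_mul]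
      rw [← h1, hDT, Matrix.mul_assoc]
    rw [hD, Matrix.diagonal_apply_eq] at hDTi
    exact genQR_aux_sign (hg i) (hg' i) (hTdpos i) hDTi
  have hT1 : T = 1 := by
    ext i j
    by_cases hij : i = j
    · subst hij; rw [hTdiag1 i, Matrix.one_apply_eq]
    · rw [hToff i j hij, Matrix.one_apply_ne hij]
  -- conclude R = R'
  have hRR : R = R' := by
    have : T * R = R' := by
      rw [hT, Matrix.mul_assoc, Matrix.nonsing_inv_mul _ hdetR, Matrix.mul_one]
    rw [← this, hT1, Matrix.one_mul]
  have hDD'eq : D = D' := by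
    rw [hDT, hT1, Matrix.transpose_one, Matrix.one_mul, Matrix.mul_one]
  refine ⟨?_, hDD'eq, hRR⟩
  -- conclude Q = Q'
  have hdetD : IsUnit D.det := by
    rw [hD, Matrix.det_diagonal]
    exact (Finset.prod_ne_zero_iff.mpr fun i _ => hg0 i).isUnit
  have hdetDR : IsUnit (D * R).det := by rw [Matrix.det_mul]; exact hdetD.mul hdetR
  have hQeq : Q * (D * R) = Q' * (D * R) := by
    rw [← Matrix.mul_assoc, ← Matrix.mul_assoc, ← hdec, hdec', hDD'eq, hRR]
  calc Q = Q * (D * R) * (D * R)⁻¹ := by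
        rw [Matrix.mul_nonsing_inv_cancel_right _ _ hdetDR]
    _ = Q' * (D * R) * (D * R)⁻¹ := by rw [hQeq]
    _ = Q' := by rw [Matrix.mul_nonsing_inv_cancel_right _ _ hdetDR]
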